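/- Let p be an odd prime. The group C_{p^2} × C_{p^2} is capable (it is isomorphic to Q/Z(Q) for some group Q) but not η-capable (there is no finite p-group P with P/η(P) ≅ C_{p^2} × C_{p^2}). -/

import Mathlib

/-- The subgroup generated by `p`-th powers of elements of `N`. -/
def pPow {G : Type*} [Group G] (p : ℕ) (N : Subgroup G) : Subgroup G :=
  Subgroup.closure ((fun x => x ^ p) '' (N : Set G))

theorem pPow_normal {G : Type*} [Group G] (p : ℕ) {N : Subgroup G} (hN : N.Normal) :
    (pPow p N).Normal := by
  constructor
  intro x hx g
  have h : pPow p N ≤ Subgroup.comap (MulAut.conj g).toMonoidHom (pPow p N) := by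
    rw [pPow, Subgroup.closure_le]
    rintro - ⟨n, hn, rfl⟩
    have : (MulAut.conj g) (n ^ p) = (g * n * g⁻¹) ^ p := by
      simp [MulAut.conj_apply, conj_pow]
    refine Subgroup.mem_comap.2 ?_
    show (MulAut.conj g) (n ^ p) ∈ _
    rw [this]
    exact Subgroup.subset_closure ⟨g * n * g⁻¹, hN.conj_mem n hn g, rfl⟩
  simpa using h hx

theorem normal_sSup {G : Type*} [Group G] {S : Set (Subgroup G)}
    (hS : ∀ N ∈ S, N.Normal) : (sSup S).Normal := by
  constructor
  intro x hx g
  have h : sSup S ≤ Subgroup.comap (MulAut.conj g).toMonoidHom (sSup S) := by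
    refine sSup_le fun N hN => le_trans ?_ (Subgroup.comap_mono (le_sSup hN))
    intro n hn
    exact Subgroup.mem_comap.2 (by simpa using (hS N hN).conj_mem n hn g)
  simpa using h hx

/-- The upper η-series: `η₀ = 1`, and `η_{i+1}/η_i = η(G/η_i)` is the product of all
powerfully embedded subgroups of `G/η_i`. -/
def etaUp (p : ℕ) (G : Type*) [Group G] : ℕ → Subgroup G
  | 0 => ⊥
  | i + 1 => sSup {N : Subgroup G | N.Normal ∧ ⁅N, (⊤ : Subgroup G)⁆ ≤ pPow p N ⊔ etaUp p G i}

instance etaUp_normal (p : ℕ) (G : Type*) [Group G] (i : ℕ) : (etaUp p G i).Normal := by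
  cases i with
  | zero => show (⊥ : Subgroup G).Normal; infer_instance
  | succ i => exact normal_sSup fun N hN => hN.1

/-- The powerful class of `G`. -/
noncomputable def pwc (p : ℕ) (G : Type*) [Group G] : ℕ := sInf {k | etaUp p G k = ⊤}

/-- Iterated commutator `[N, G, G, ..., G]` with `i` copies of `G`. -/
def itComm {G : Type*} [Group G] (N : Subgroup G) : ℕ → Subgroup G
  | 0 => N
  | i + 1 => ⁅itComm N i, (⊤ : Subgroup G)⁆

/-- `N` is PF-embedded in `G`: it admits a potent filtration. -/
def PFEmbedded {G : Type*} [Group G] (p : ℕ) (N : Subgroup G) : Prop :=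
  ∃ (s : ℕ) (M : ℕ → Subgroup G), M 0 = N ∧ M s = ⊥ ∧
    (∀ i, M (i + 1) ≤ M i) ∧ (∀ i, (M i).Normal) ∧
    (∀ i, ⁅M i, (⊤ : Subgroup G)⁆ ≤ M (i + 1)) ∧
    (∀ i, itComm (M i) (p - 1) ≤ pPow p (M (i + 1)))

/-! ### Auxiliary material -/

open scoped commutatorElement

section Aux

lemma pPow_mono {G : Type*} [Group G] {p : ℕ} {N M : Subgroup G} (h : N ≤ M) :
    pPow p N ≤ pPow p M :=
  Subgroup.closure_mono (Set.image_mono h)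

lemma mem_pPow {G : Type*} [Group G] {p : ℕ} {N : Subgroup G} {x : G} (hx : x ∈ N) :
    x ^ p ∈ pPow p N :=
  Subgroup.subset_closure ⟨x, hx, rfl⟩

lemma mem_Zcomap {G : Type*} [Group G] {K : Subgroup G} [K.Normal] {g : G} :
    g ∈ Subgroup.comap (QuotientGroup.mk' K) (Subgroup.center (G ⧸ K)) ↔
      ∀ h : G, ⁅g, h⁆ ∈ K := by
  rw [Subgroup.mem_comap, Subgroup.mem_center_iff]
  constructor
  · intro H h
    rw [← QuotientGroup.eq_one_iff, ← QuotientGroup.mk'_apply, map_commutatorElement,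
        commutatorElement_eq_one_iff_mul_comm]
    exact (H ((QuotientGroup.mk' K) h)).symm
  · intro H q
    induction q using QuotientGroup.induction_on with
    | _ h =>
      have := H h
      rw [← QuotientGroup.eq_one_iff, ← QuotientGroup.mk'_apply, map_commutatorElement,
          commutatorElement_eq_one_iff_mul_comm] at this
      exact this.symm

lemma comm_pow {Q : Type*} [Group Q] (hc : ∀ a b c : Q, ⁅a, b⁆ * c = c * ⁅a, b⁆)
    (x g : Q) : ∀ n : ℕ, ⁅x ^ n, g⁆ = ⁅x, g⁆ ^ n
  | 0 => by simp
  | n + 1 => by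
    have key : ⁅x * x ^ n, g⁆ = (x * ⁅x ^ n, g⁆ * x⁻¹) * ⁅x, g⁆ := by
      simp only [commutatorElement_def]
      group
    have hcen : x * ⁅x ^ n, g⁆ = ⁅x ^ n, g⁆ * x := (hc _ _ x).symm
    rw [pow_succ', key, hcen, comm_pow hc x g n, pow_succ]
    group

/-! ### The Heisenberg group over `ZMod n` -/

structure Heis (n : ℕ) : Type where
  a : ZMod n
  b : ZMod n
  c : ZMod n

namespace Heis
variable {n : ℕ}

instance : Mul (Heis n) := ⟨fun x y => ⟨x.a + y.a, x.b + y.b, x.c + y.c + x.a * y.b⟩⟩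
instance : One (Heis n) := ⟨⟨0, 0, 0⟩⟩
instance : Inv (Heis n) := ⟨fun x => ⟨-x.a, -x.b, x.a * x.b - x.c⟩⟩

@[simp] lemma mul_a (x y : Heis n) : (x * y).a = x.a + y.a := rfl
@[simp] lemma mul_b (x y : Heis n) : (x * y).b = x.b + y.b := rfl
@[simp] lemma mul_c (x y : Heis n) : (x * y).c = x.c + y.c + x.a * y.b := rfl
@[simp] lemma one_a : (1 : Heis n).a = 0 := rfl
@[simp] lemma one_b : (1 : Heis n).b = 0 := rfl
@[simp] lemma one_c : (1 : Heis n).c = 0 := rfl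

lemma ext' {x y : Heis n} (ha : x.a = y.a) (hb : x.b = y.b) (hc : x.c = y.c) : x = y := by
  cases x; cases y; cases ha; cases hb; cases hc; rfl

instance : Group (Heis n) where
  mul_assoc x y z := ext' (by simp; ring) (by simp; ring) (by simp; ring)
  one_mul x := ext' (by simp) (by simp) (by simp)
  mul_one x := ext' (by simp) (by simp) (by simp)
  inv_mul_cancel x := ext' (by show -x.a + x.a = 0; simp)
    (by show -x.b + x.b = 0; simp)
    (by show x.a * x.b - x.c + x.c + -x.a * x.b = 0; ring)

def proj : Heis n →* Multiplicative (ZMod n × ZMod n) where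
  toFun x := Multiplicative.ofAdd (x.a, x.b)
  map_one' := rfl
  map_mul' _ _ := rfl

lemma proj_surjective : Function.Surjective (proj (n := n)) := fun z =>
  ⟨⟨(Multiplicative.toAdd z).1, (Multiplicative.toAdd z).2, 0⟩, rfl⟩

lemma center_eq : Subgroup.center (Heis n) = (proj (n := n)).ker := by
  ext x
  rw [Subgroup.mem_center_iff, MonoidHom.mem_ker]
  constructor
  · intro H
    have h1 := congrArg Heis.c (H ⟨0, 1, 0⟩)
    have h2 := congrArg Heis.c (H ⟨1, 0, 0⟩)
    simp only [mul_c, mul_a, mul_b] at h1 h2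
    have ha : x.a = 0 := by
      have : (0 : ZMod n) + x.c + 0 * x.b = x.c + 0 + x.a * 1 := h1
      simpa using this.symm
    have hb : x.b = 0 := by
      have : (0 : ZMod n) + x.c + 1 * x.b = x.c + 0 + x.a * 0 := h2
      simpa using this
    show Multiplicative.ofAdd (x.a, x.b) = 1
    rw [ha, hb]
    rfl
  · intro H g
    have ha : x.a = 0 := congrArg (fun z => (Multiplicative.toAdd z).1) H
    have hb : x.b = 0 := congrArg (fun z => (Multiplicative.toAdd z).2) H
    refine ext' (by simp [add_comm]) (by simp [add_comm]) ?_
    show g.c + x.c + g.a * x.b = x.c + g.c + x.a * g.b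
    rw [ha, hb]
    ring

noncomputable def projKerEquiv (n : ℕ) :=
  QuotientGroup.quotientKerEquivOfSurjective (G := Heis n) proj proj_surjective

noncomputable def quotCenterEquiv :
    (Heis n ⧸ Subgroup.center (Heis n)) ≃* Multiplicative (ZMod n × ZMod n) :=
  (QuotientGroup.quotientMulEquivOfEq center_eq).trans (projKerEquiv n)

end Heis

end Aux

/-- `C_{p²} × C_{p²}` is capable but not η-capable. -/
theorem Cp2xCp2_capable_not_eta_capable {p : ℕ} (hp : p.Prime) (hodd : Odd p) :
    (∃ (Q : Type) (_ : Group Q),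
        Nonempty ((Q ⧸ Subgroup.center Q) ≃*
          Multiplicative (ZMod (p ^ 2) × ZMod (p ^ 2)))) ∧
      ¬ ∃ (P : Type) (_ : Group P), Finite P ∧ IsPGroup p P ∧
          Nonempty ((P ⧸ etaUp p P 1) ≃*
            Multiplicative (ZMod (p ^ 2) × ZMod (p ^ 2))) := by
  constructor
  · exact ⟨Heis (p ^ 2), inferInstance, ⟨Heis.quotCenterEquiv⟩⟩
  · rintro ⟨P, instP, -, -, ⟨e⟩⟩
    -- notation
    set η : Subgroup P := etaUp p P 1 with hηdef
    haveI hηn : η.Normal := etaUp_normal p P 1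
    set K : Subgroup P := pPow p η with hKdef
    haveI hKn : K.Normal := pPow_normal p hηn
    have hη_eq : η = sSup {N : Subgroup P |
        N.Normal ∧ ⁅N, (⊤ : Subgroup P)⁆ ≤ pPow p N ⊔ etaUp p P 0} := by
      simp [hηdef, etaUp]
    -- η is powerfully embedded: every element of η is central mod K
    have hηZ : ∀ n ∈ η, ∀ h : P, ⁅n, h⁆ ∈ K := by
      have : η ≤ Subgroup.comap (QuotientGroup.mk' K) (Subgroup.center (P ⧸ K)) := by
        rw [hη_eq]
        refine sSup_le ?_
        rintro N ⟨hN1, hN2⟩ x hx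
        rw [mem_Zcomap]
        intro h
        have hN : N ≤ η := by
          rw [hη_eq]; exact le_sSup ⟨hN1, hN2⟩
        have hmem : ⁅x, h⁆ ∈ pPow p N ⊔ etaUp p P 0 :=
          (Subgroup.commutator_le).mp hN2 x hx h (Subgroup.mem_top h)
        have : pPow p N ⊔ etaUp p P 0 ≤ K := by
          refine sup_le (pPow_mono hN) ?_
          show etaUp p P 0 ≤ K
          simp [etaUp]
        exact this hmem
      intro x hx h
      exact (mem_Zcomap.mp (this hx)) h
    -- the quotient P⧸η is abelian, so all commutators lie in η
    have hcomm : ∀ a b : P, ⁅a, b⁆ ∈ η := by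
      intro a b
      rw [← QuotientGroup.eq_one_iff]
      apply e.injective
      rw [← QuotientGroup.mk'_apply, map_commutatorElement, map_commutatorElement, map_one,
        commutatorElement_eq_one_iff_mul_comm]
      exact mul_comm _ _
    -- commutators are central in P⧸K
    have hcent : ∀ a b c : P ⧸ K, ⁅a, b⁆ * c = c * ⁅a, b⁆ := by
      intro a b c
      induction a using QuotientGroup.induction_on with | _ x =>
      induction b using QuotientGroup.induction_on with | _ y =>
      induction c using QuotientGroup.induction_on with | _ z =>
      have : ⁅⁅x, y⁆, z⁆ ∈ K := hηZ _ (hcomm x y) z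
      rw [← QuotientGroup.eq_one_iff, ← QuotientGroup.mk'_apply, map_commutatorElement,
        map_commutatorElement, commutatorElement_eq_one_iff_mul_comm] at this
      simpa [QuotientGroup.mk'_apply] using this
    -- key claim : p-th powers are central mod K
    have hclaim : ∀ x g : P, ⁅x ^ p, g⁆ ∈ K := by
      intro x g
      rw [← QuotientGroup.eq_one_iff, ← QuotientGroup.mk'_apply, map_commutatorElement,
        map_pow]
      rw [comm_pow hcent _ _ p, ← map_commutatorElement, ← map_pow, QuotientGroup.mk'_apply,
        QuotientGroup.eq_one_iff]
      exact mem_pPow (hcomm x g)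
    -- M = η ⊔ P^p is powerfully embedded, hence contained in η
    set M : Subgroup P := η ⊔ pPow p (⊤ : Subgroup P) with hMdef
    haveI : (pPow p (⊤ : Subgroup P)).Normal := pPow_normal p inferInstance
    haveI hMn : M.Normal := Subgroup.sup_normal _ _
    have hMcent : ∀ g ∈ M, ∀ h : P, ⁅g, h⁆ ∈ K := by
      have : M ≤ Subgroup.comap (QuotientGroup.mk' K) (Subgroup.center (P ⧸ K)) := by
        refine sup_le ?_ ?_
        · intro x hx
          rw [mem_Zcomap]
          exact hηZ x hx
        · rw [pPow, Subgroup.closure_le]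
          rintro - ⟨x, -, rfl⟩
          rw [SetLike.mem_coe, mem_Zcomap]
          exact fun h => hclaim x h
      intro g hg h
      exact (mem_Zcomap.mp (this hg)) h
    have hMmem : M ∈ {N : Subgroup P |
        N.Normal ∧ ⁅N, (⊤ : Subgroup P)⁆ ≤ pPow p N ⊔ etaUp p P 0} := by
      refine ⟨hMn, ?_⟩
      refine le_trans ?_ le_sup_left
      refine le_trans ?_ (pPow_mono (le_sup_left : η ≤ M))
      rw [Subgroup.commutator_le]
      intro g hg h _
      exact hMcent g hg h
    have hMle : M ≤ η := by
      rw [hη_eq]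
      exact le_sSup hMmem
    have hp_le : ∀ x : P, x ^ p ∈ η := fun x =>
      hMle (le_sup_right (α := Subgroup P) (mem_pPow (Subgroup.mem_top x)))
    -- hence P⧸η has exponent p ...
    have hexp : ∀ q : P ⧸ η, q ^ p = 1 := by
      intro q
      induction q using QuotientGroup.induction_on with | _ x =>
      rw [← QuotientGroup.mk'_apply, ← map_pow, QuotientGroup.mk'_apply,
        QuotientGroup.eq_one_iff]
      exact hp_le x
    -- ... contradicting the element ofAdd (1,0) of order p²
    have hy : (Multiplicative.ofAdd ((1 : ZMod (p ^ 2)), (0 : ZMod (p ^ 2)))) ^ p = 1 := by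
      have h1 := hexp (e.symm (Multiplicative.ofAdd ((1 : ZMod (p ^ 2)), (0 : ZMod (p ^ 2)))))
      have h2 := congrArg e h1
      rwa [map_pow, MulEquiv.apply_symm_apply, map_one] at h2
    have h3 : (p : ZMod (p ^ 2)) = 0 := by
      have := congrArg (fun z => (Multiplicative.toAdd z).1) hy
      simpa [toAdd_pow, nsmul_eq_mul] using this
    haveI : NeZero (p ^ 2) := ⟨pow_ne_zero 2 hp.ne_zero⟩
    have h4 : p ^ 2 ∣ p := by
      rwa [ZMod.natCast_eq_zero_iff] at h3
    have h5 : p ^ 2 ≤ p := Nat.le_of_dvd hp.pos h4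
    have h6 : p < p ^ 2 := by
      calc p = p ^ 1 := (pow_one p).symm
      _ < p ^ 2 := Nat.pow_lt_pow_right hp.one_lt (by norm_num)
    omega
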